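/- arXiv:1903.02675 — 2 statements merged into one kernel-verified Lean document; each statement's English description precedes it below -/
import Mathlib

section
/- Let n ≥ 3 be an integer and let z be a real random variable supported on (0,1) with probability density Γ(n/2)/(Γ(1/2)·Γ((n−1)/2)) · x^{−1/2}·(1−x)^{(n−3)/2} (the Beta(1/2,(n−1)/2) distribution). Then for every δ ∈ (0,1): P( z ≥ δ²/n ) > 1 − δ. -/
open MeasureTheory Matrix

noncomputable section

open scoped Classical in
/-- Eigenvalues of a real symmetric (Hermitian) matrix; junk value `0` otherwise. -/
noncomputable def eigs {n : ℕ} (Y : Matrix (Fin n) (Fin n) ℝ) : Fin n → ℝ :=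
  if h : Y.IsHermitian then h.eigenvalues else 0

/-- Largest eigenvalue of a real symmetric matrix. -/
noncomputable def lambdaMax {n : ℕ} (Y : Matrix (Fin n) (Fin n) ℝ) : ℝ :=
  ⨆ i, eigs Y i

/-- Operator norm of a real symmetric matrix: largest absolute value of an eigenvalue. -/
noncomputable def opNorm {n : ℕ} (Y : Matrix (Fin n) (Fin n) ℝ) : ℝ :=
  ⨆ i, |eigs Y i|

/-- Frobenius inner product `⟨A, B⟩ = tr (Aᵀ B)`. -/
noncomputable def minner {n : ℕ} (A B : Matrix (Fin n) (Fin n) ℝ) : ℝ :=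
  (Aᵀ * B).trace

/-- Matrix exponential. -/
noncomputable def mexp {n : ℕ} (Y : Matrix (Fin n) (Fin n) ℝ) : Matrix (Fin n) (Fin n) ℝ :=
  NormedSpace.exp Y

/-- The uniform (normalized surface) probability measure on the unit sphere in `ℝⁿ`. -/
noncomputable def sphereUniform (n : ℕ) :
    Measure (Metric.sphere (0 : EuclideanSpace ℝ (Fin n)) 1) :=
  ((volume : Measure (EuclideanSpace ℝ (Fin n))).toSphere Set.univ)⁻¹ •
    (volume : Measure (EuclideanSpace ℝ (Fin n))).toSphere

/-- The randomized mirror projection `P_u(Y) = e^{Y/2} u uᵀ e^{Y/2} / (uᵀ e^Y u)`. -/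
noncomputable def Pu {n : ℕ} (u : Fin n → ℝ) (Y : Matrix (Fin n) (Fin n) ℝ) :
    Matrix (Fin n) (Fin n) ℝ :=
  (u ⬝ᵥ (mexp Y *ᵥ u))⁻¹ •
    (mexp ((2 : ℝ)⁻¹ • Y) * Matrix.vecMulVec u u * mexp ((2 : ℝ)⁻¹ • Y))

/-- The average mirror projection `P̄(Y) = E_u P_u(Y)`, `u` uniform on the unit sphere
(defined entrywise via the Bochner integral). -/
noncomputable def Pbar {n : ℕ} (Y : Matrix (Fin n) (Fin n) ℝ) : Matrix (Fin n) (Fin n) ℝ :=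
  Matrix.of fun i j =>
    ∫ u, Pu (fun k => (u : EuclideanSpace ℝ (Fin n)) k) Y i j ∂(sphereUniform n)

/-- `p̄(Y) = E_u log (uᵀ e^Y u)`, `u` uniform on the unit sphere. -/
noncomputable def pbar {n : ℕ} (Y : Matrix (Fin n) (Fin n) ℝ) : ℝ :=
  ∫ u, Real.log ((fun k => (u : EuclideanSpace ℝ (Fin n)) k) ⬝ᵥ
      (mexp Y *ᵥ fun k => (u : EuclideanSpace ℝ (Fin n)) k)) ∂(sphereUniform n)

/-- Bregman divergence induced by `p̄`. -/
noncomputable def Vbar {n : ℕ} (Y Y' : Matrix (Fin n) (Fin n) ℝ) : ℝ :=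
  pbar Y' - pbar Y - minner (Y' - Y) (Pbar Y)

/-- Matrix multiplicative weights projection `P^mw(Y) = e^Y / tr e^Y`. -/
noncomputable def Pmw {n : ℕ} (Y : Matrix (Fin n) (Fin n) ℝ) : Matrix (Fin n) (Fin n) ℝ :=
  ((mexp Y).trace)⁻¹ • mexp Y

/-- Euclidean norm on `ℝⁿ`. -/
noncomputable def enorm2 {n : ℕ} (v : Fin n → ℝ) : ℝ :=
  Real.sqrt (∑ i, v i ^ 2)

/-- Trace (nuclear) norm of a real symmetric matrix: sum of absolute values of eigenvalues. -/
noncomputable def traceNorm {n : ℕ} (M : Matrix (Fin n) (Fin n) ℝ) : ℝ :=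
  ∑ i, |eigs M i|

set_option maxHeartbeats 1000000 in
theorem gautschi' (x : ℝ) (hx : 0 < x) :
    Real.Gamma (x + 1/2) ^ 2 ≤ x * Real.Gamma x ^ 2 := by
  have h := Real.convexOn_log_Gamma.2 (Set.mem_Ioi.2 hx) (Set.mem_Ioi.2 (by linarith : (0:ℝ) < x + 1))
    (by norm_num : (0:ℝ) ≤ 1/2) (by norm_num : (0:ℝ) ≤ 1/2) (by norm_num)
  simp only [Function.comp, smul_eq_mul] at h
  have hmid : (1/2 : ℝ) * x + (1/2 : ℝ) * (x+1) = x + 1/2 := by ring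
  rw [hmid] at h
  have hg1 : 0 < Real.Gamma x := Real.Gamma_pos_of_pos hx
  have hg2 : 0 < Real.Gamma (x+1) := Real.Gamma_pos_of_pos (by linarith)
  have hg3 : 0 < Real.Gamma (x+1/2) := Real.Gamma_pos_of_pos (by linarith)
  have h2 : Real.log (Real.Gamma (x+1/2) ^ 2) ≤ Real.log (Real.Gamma x * Real.Gamma (x+1)) := by
    rw [Real.log_pow, Real.log_mul hg1.ne' hg2.ne']
    push_cast; linarith
  have h3 : Real.Gamma (x+1/2) ^ 2 ≤ Real.Gamma x * Real.Gamma (x+1) :=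
    (Real.log_le_log_iff (by positivity) (by positivity)).1 h2
  calc Real.Gamma (x+1/2) ^ 2 ≤ Real.Gamma x * Real.Gamma (x+1) := h3
    _ = x * Real.Gamma x ^ 2 := by rw [Real.Gamma_add_one hx.ne']; ring

theorem realBeta (u v : ℝ) (hu : 0 < u) (hv : 0 < v) :
    Real.Gamma u * Real.Gamma v =
      Real.Gamma (u + v) * ∫ x in (0:ℝ)..1, x ^ (u - 1) * (1 - x) ^ (v - 1) := by
  have h := Complex.Gamma_mul_Gamma_eq_betaIntegral (s := u) (t := v) (by simpa using hu)
    (by simpa using hv)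
  have hbeta : Complex.betaIntegral u v =
      ((∫ x in (0:ℝ)..1, x ^ (u - 1) * (1 - x) ^ (v - 1) : ℝ) : ℂ) := by
    rw [Complex.betaIntegral, ← intervalIntegral.integral_ofReal]
    refine intervalIntegral.integral_congr fun x hx => ?_
    rw [Set.uIcc_of_le (by norm_num : (0:ℝ) ≤ 1)] at hx
    push_cast
    rw [Complex.ofReal_cpow hx.1, Complex.ofReal_cpow (by linarith [hx.2] : (0:ℝ) ≤ 1 - x)]
    push_cast
    ring
  rw [hbeta, ← Complex.ofReal_add] at h
  rw [Complex.Gamma_ofReal, Complex.Gamma_ofReal, Complex.Gamma_ofReal] at h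
  exact_mod_cast h

theorem intf (p : ℝ) (hp : 0 ≤ p) :
    IntervalIntegrable (fun x : ℝ => x ^ (-(1:ℝ)/2) * (1 - x) ^ p) MeasureTheory.volume 0 1 := by
  apply IntervalIntegrable.mul_continuousOn
  · exact intervalIntegral.intervalIntegrable_rpow' (by norm_num)
  · rcases eq_or_lt_of_le hp with h | h
    · simpa [← h] using continuousOn_const
    · exact ((Real.continuous_rpow_const h.le).comp
        (continuous_const.sub continuous_id)).continuousOn

set_option maxHeartbeats 1000000 in
/-- Anti-concentration for `Beta(1/2,(n−1)/2)`:
`P(z ≥ δ²/n) > 1 − δ`, written via the defining density integral. -/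
theorem stmt17 (n : ℕ) (hn : 3 ≤ n) (δ : ℝ) (hδ0 : 0 < δ) (hδ1 : δ < 1) :
    1 - δ <
      ∫ x in (δ ^ 2 / n : ℝ)..(1 : ℝ),
        Real.Gamma ((n : ℝ) / 2) / (Real.Gamma (1 / 2) * Real.Gamma (((n : ℝ) - 1) / 2)) *
          x ^ (-(1 : ℝ) / 2) * (1 - x) ^ (((n : ℝ) - 3) / 2) := by
  set N : ℝ := (n : ℝ) with hNdef
  have hN3 : (3:ℝ) ≤ N := by rw [hNdef]; exact_mod_cast hn
  have hNpos : (0:ℝ) < N := by linarith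
  set p : ℝ := (N - 3) / 2 with hpdef
  have hp : 0 ≤ p := by rw [hpdef]; linarith
  set c : ℝ := Real.Gamma (N / 2) / (Real.Gamma (1 / 2) * Real.Gamma ((N - 1) / 2)) with hcdef
  set f : ℝ → ℝ := fun x => x ^ (-(1:ℝ)/2) * (1 - x) ^ p with hfdef
  set a : ℝ := δ ^ 2 / N with hadef
  have ha0 : 0 < a := by positivity
  have ha1 : a < 1 := by
    rw [hadef, div_lt_one hNpos]; nlinarith
  have hg12 : 0 < Real.Gamma (1/2) := Real.Gamma_pos_of_pos (by norm_num)
  have hgv : 0 < Real.Gamma ((N-1)/2) := Real.Gamma_pos_of_pos (by linarith)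
  have hgN : 0 < Real.Gamma (N/2) := Real.Gamma_pos_of_pos (by linarith)
  have hc : 0 < c := by rw [hcdef]; positivity
  -- integrability
  have hint : IntervalIntegrable f MeasureTheory.volume 0 1 := intf p hp
  have hint0a : IntervalIntegrable f MeasureTheory.volume 0 a :=
    hint.mono_set (by rw [Set.uIcc_of_le ha0.le, Set.uIcc_of_le (by norm_num : (0:ℝ) ≤ 1)]; exact Set.Icc_subset_Icc le_rfl ha1.le)
  have hinta1 : IntervalIntegrable f MeasureTheory.volume a 1 :=
    hint.mono_set (by rw [Set.uIcc_of_le ha1.le, Set.uIcc_of_le (by norm_num : (0:ℝ) ≤ 1)]; exact Set.Icc_subset_Icc ha0.le le_rfl)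
  -- total mass
  have htotal : ∫ x in (0:ℝ)..1, f x = Real.Gamma (1/2) * Real.Gamma ((N-1)/2) / Real.Gamma (N/2) := by
    have hb := realBeta (1/2) ((N-1)/2) (by norm_num) (by linarith)
    have he : (1:ℝ)/2 + (N-1)/2 = N/2 := by ring
    rw [he] at hb
    have hfi : ∫ x in (0:ℝ)..1, x ^ ((1:ℝ)/2 - 1) * (1 - x) ^ ((N-1)/2 - 1)
        = ∫ x in (0:ℝ)..1, f x := by
      apply intervalIntegral.integral_congr
      intro x hx
      rw [hfdef]
      have e1 : (1:ℝ)/2 - 1 = -(1:ℝ)/2 := by norm_num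
      have e2 : (N-1)/2 - 1 = p := by rw [hpdef]; ring
      rw [e1, e2]
    rw [hfi] at hb
    field_simp
    linarith [hb]
  -- split
  have hsplit : ∫ x in a..(1:ℝ), f x = (∫ x in (0:ℝ)..1, f x) - ∫ x in (0:ℝ)..a, f x := by
    rw [← intervalIntegral.integral_add_adjacent_intervals hint0a hinta1]
    ring
  -- head bound
  have hhead : ∫ x in (0:ℝ)..a, f x ≤ 2 * Real.sqrt a := by
    have h1 : IntervalIntegrable (fun x : ℝ => x ^ (-(1:ℝ)/2)) MeasureTheory.volume 0 a :=
      intervalIntegral.intervalIntegrable_rpow' (by norm_num)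
    have hmono : ∫ x in (0:ℝ)..a, f x ≤ ∫ x in (0:ℝ)..a, x ^ (-(1:ℝ)/2) := by
      apply intervalIntegral.integral_mono_on ha0.le hint0a h1
      intro x hx
      rw [hfdef]
      have hx0 : 0 ≤ x := hx.1
      have hx1 : x ≤ a := hx.2
      have h1x : (1 - x) ^ p ≤ 1 :=
        Real.rpow_le_one (by linarith) (by linarith) hp
      have : (0:ℝ) ≤ x ^ (-(1:ℝ)/2) := Real.rpow_nonneg hx0 _
      nlinarith
    have hval : ∫ x in (0:ℝ)..a, x ^ (-(1:ℝ)/2) = 2 * Real.sqrt a := by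
      rw [integral_rpow (Or.inl (by norm_num : (-1:ℝ) < -1/2))]
      rw [Real.zero_rpow (by norm_num : (-1:ℝ)/2 + 1 ≠ 0), Real.sqrt_eq_rpow]
      norm_num
      ring
    linarith
  -- gautschi bound: c * (2 * sqrt a) < δ
  have hkey : c * (2 * Real.sqrt a) < δ := by
    have hga := gautschi' ((N-1)/2) (by linarith)
    have he2 : (N-1)/2 + 1/2 = N/2 := by ring
    rw [he2] at hga
    have hpi : Real.Gamma (1/2) = Real.sqrt Real.pi := Real.Gamma_one_half_eq
    have hpipos := Real.pi_pos
    have hLnn : 0 ≤ c * (2 * Real.sqrt a) := by positivity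
    refine lt_of_pow_lt_pow_left₀ 2 hδ0.le ?_
    have hsqa : Real.sqrt a ^ 2 = a := Real.sq_sqrt ha0.le
    have hsqpi : Real.sqrt Real.pi ^ 2 = Real.pi := Real.sq_sqrt hpipos.le
    have hexp : (c * (2 * Real.sqrt a)) ^ 2
        = 4 * a * (Real.Gamma (N/2) ^ 2 / (Real.pi * Real.Gamma ((N-1)/2) ^ 2)) := by
      have h0 : (c * (2 * Real.sqrt a)) ^ 2 = 4 * Real.sqrt a ^ 2 * c ^ 2 := by ring
      rw [h0, hsqa, hcdef, hpi, div_pow, mul_pow, hsqpi]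
    rw [hexp]
    have hbound : Real.Gamma (N/2) ^ 2 / (Real.pi * Real.Gamma ((N-1)/2) ^ 2)
        ≤ (N-1)/2 / Real.pi := by
      rw [div_le_div_iff₀ (by positivity) (by positivity)]
      nlinarith [hga, hpipos]
    have hpi3 : (3:ℝ) < Real.pi := Real.pi_gt_three
    have h4a : 0 < 4 * a := by linarith
    calc 4 * a * (Real.Gamma (N/2) ^ 2 / (Real.pi * Real.Gamma ((N-1)/2) ^ 2))
        ≤ 4 * a * ((N-1)/2 / Real.pi) := by
          apply mul_le_mul_of_nonneg_left hbound h4a.le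
      _ = 2 * δ^2 * (N-1) / (Real.pi * N) := by rw [hadef]; field_simp; ring
      _ < δ ^ 2 := by
          rw [div_lt_iff₀ (by positivity)]
          nlinarith [mul_nonneg (mul_nonneg (sub_nonneg.2 hpi3.le) (sq_nonneg δ)) hNpos.le,
            mul_pos (pow_pos hδ0 2) hNpos]
  have hfin : c * ∫ x in (0:ℝ)..a, f x < δ := by
    calc c * ∫ x in (0:ℝ)..a, f x ≤ c * (2 * Real.sqrt a) := by
          apply mul_le_mul_of_nonneg_left hhead hc.le
      _ < δ := hkey
  have hctotal : c * ∫ x in (0:ℝ)..1, f x = 1 := by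
    rw [htotal, hcdef]; field_simp
  have hgoal : ∫ x in a..(1:ℝ), c * f x > 1 - δ := by
    rw [intervalIntegral.integral_const_mul, hsplit, mul_sub, hctotal]
    linarith
  calc 1 - δ < ∫ x in a..(1:ℝ), c * f x := hgoal
    _ = _ := by
        apply intervalIntegral.integral_congr
        intro x hx
        rw [hfdef, hcdef]
        ring
end
end

section
/- Let Y be a real symmetric n×n matrix, let u ∈ ℝⁿ be nonzero, let ε ∈ [0,1), and suppose y ∈ ℝⁿ satisfies ‖e^{Y/2}u − y‖₂ ≤ (ε/√8)·‖e^{Y/2}u‖₂. Then y ≠ 0 and ‖P_u(Y) − y yᵀ/‖y‖₂²‖₁ ≤ ε, where ‖·‖₁ denotes the trace (nuclear) norm, i.e., the sum of the absolute values of the eigenvalues. -/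
open MeasureTheory Matrix

noncomputable section

section AuxStmt18

open Matrix

private lemma star_mul_self_unitary {n : ℕ} (M : Matrix (Fin n) (Fin n) ℝ) (hM : M.IsHermitian) :
    (star (hM.eigenvectorUnitary : Matrix (Fin n) (Fin n) ℝ)) *
      (hM.eigenvectorUnitary : Matrix (Fin n) (Fin n) ℝ) = 1 := by
  exact Matrix.mem_unitaryGroup_iff'.mp (hM.eigenvectorUnitary).2

private lemma sum_sq_eigs_eq {n : ℕ} (M : Matrix (Fin n) (Fin n) ℝ) (hM : M.IsHermitian) :
    ∑ i, hM.eigenvalues i ^ 2 = (M * M).trace := by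
  conv_rhs => rw [hM.spectral_theorem, Unitary.conjStarAlgAut_apply]
  rw [show ∀ U D : Matrix (Fin n) (Fin n) ℝ, (U * D * star U) * (U * D * star U)
      = U * (D * ((star U * U) * D)) * star U by intros; noncomm_ring]
  rw [star_mul_self_unitary M hM, Matrix.one_mul, Matrix.trace_mul_cycle,
    star_mul_self_unitary M hM, Matrix.one_mul, Matrix.diagonal_mul_diagonal,
    Matrix.trace_diagonal]
  simp [pow_two]

private lemma rank_vecMulVec_le' {n : ℕ} (w v : Fin n → ℝ) :
    (Matrix.vecMulVec w v).rank ≤ 1 := by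
  rw [Matrix.rank]
  have hr : LinearMap.range (Matrix.vecMulVec w v).mulVecLin ≤ Submodule.span ℝ {w} := by
    rintro x ⟨c, rfl⟩
    have : (Matrix.vecMulVec w v).mulVecLin c = (v ⬝ᵥ c) • w := by
      ext i
      simp [Matrix.mulVecLin_apply, Matrix.mulVec, Matrix.vecMulVec_apply, dotProduct,
        Finset.mul_sum, Finset.sum_mul, mul_comm, mul_assoc, mul_left_comm]
    rw [this]
    exact Submodule.smul_mem _ _ (Submodule.mem_span_singleton_self w)
  refine (Submodule.finrank_mono hr).trans ?_
  by_cases hw : w = 0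
  · subst hw
    rw [Submodule.span_zero_singleton, finrank_bot]
    norm_num
  · rw [finrank_span_singleton hw]

private lemma rank_add_le' {n : ℕ} (A B : Matrix (Fin n) (Fin n) ℝ) :
    (A + B).rank ≤ A.rank + B.rank := by
  rw [Matrix.rank, Matrix.rank, Matrix.rank, Matrix.mulVecLin_add]
  have hr : LinearMap.range (A.mulVecLin + B.mulVecLin) ≤
      LinearMap.range A.mulVecLin ⊔ LinearMap.range B.mulVecLin := by
    rintro x ⟨v, rfl⟩
    exact Submodule.mem_sup.2 ⟨A.mulVecLin v, ⟨v, rfl⟩, B.mulVecLin v, ⟨v, rfl⟩, rfl⟩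
  exact (Submodule.finrank_mono hr).trans
    (Submodule.finrank_add_le_finrank_add_finrank _ _)

private lemma sum_abs_sq_le {n : ℕ} (f : Fin n → ℝ)
    (hcard : Fintype.card {i // f i ≠ 0} ≤ 2) :
    (∑ i, |f i|) ^ 2 ≤ 2 * ∑ i, f i ^ 2 := by
  classical
  set S : Finset (Fin n) := Finset.univ.filter (fun i => f i ≠ 0) with hS
  have h1 : ∑ i, |f i| = ∑ i ∈ S, |f i| := by
    rw [eq_comm]
    apply Finset.sum_subset (Finset.subset_univ _)
    intro x _ hx
    simp only [hS, Finset.mem_filter, Finset.mem_univ, true_and, not_not] at hx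
    simp [hx]
  have h2 : (∑ i ∈ S, |f i|) ^ 2 ≤ (∑ i ∈ S, (1:ℝ) ^ 2) * ∑ i ∈ S, f i ^ 2 := by
    calc (∑ i ∈ S, |f i|) ^ 2 = (∑ i ∈ S, 1 * |f i|) ^ 2 := by simp
    _ ≤ (∑ i ∈ S, (1:ℝ) ^ 2) * ∑ i ∈ S, |f i| ^ 2 :=
        Finset.sum_mul_sq_le_sq_mul_sq S _ _
    _ = (∑ i ∈ S, (1:ℝ) ^ 2) * ∑ i ∈ S, f i ^ 2 := by simp [sq_abs]
  have h3 : (∑ i ∈ S, (1:ℝ) ^ 2) = (S.card : ℝ) := by simp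
  have h4 : (S.card : ℝ) ≤ 2 := by
    have : S.card = Fintype.card {i // f i ≠ 0} := (Fintype.card_subtype _).symm
    rw [this]
    exact_mod_cast hcard
  have h5 : ∑ i ∈ S, f i ^ 2 ≤ ∑ i, f i ^ 2 :=
    Finset.sum_le_sum_of_subset_of_nonneg (Finset.subset_univ _) (fun i _ _ => sq_nonneg _)
  have h6 : (0:ℝ) ≤ ∑ i ∈ S, f i ^ 2 := Finset.sum_nonneg fun i _ => sq_nonneg _
  rw [h1]
  calc (∑ i ∈ S, |f i|) ^ 2 ≤ (S.card : ℝ) * ∑ i ∈ S, f i ^ 2 := by rw [← h3]; exact h2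
  _ ≤ 2 * ∑ i, f i ^ 2 := mul_le_mul h4 h5 h6 (by norm_num)

private lemma le_of_sq_le_half_sq {a e : ℝ} (ha : 0 ≤ a) (he : 0 ≤ e)
    (h : a ^ 2 ≤ e ^ 2 / 2) : a ≤ e := by
  nlinarith

private lemma trace_vecMulVec' {n : ℕ} (w v : Fin n → ℝ) :
    (Matrix.vecMulVec w v).trace = w ⬝ᵥ v := by
  simp [Matrix.trace, Matrix.vecMulVec_apply, Matrix.diag, dotProduct]

private lemma vecMulVec_mul_vecMulVec {n : ℕ} (a b c d : Fin n → ℝ) :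
    Matrix.vecMulVec a b * Matrix.vecMulVec c d = (b ⬝ᵥ c) • Matrix.vecMulVec a d := by
  ext i j
  simp [Matrix.mul_apply, Matrix.vecMulVec_apply, dotProduct, Finset.sum_mul,
    Finset.mul_sum]
  ring_nf
  apply Finset.sum_congr rfl
  intros; ring

private lemma smul_vecMulVec {n : ℕ} (c : ℝ) (w v : Fin n → ℝ) :
    c • Matrix.vecMulVec w v = Matrix.vecMulVec (c • w) v := by
  ext i j
  simp [Matrix.vecMulVec_apply, mul_assoc]

private lemma mexp_transpose {n : ℕ} (Y : Matrix (Fin n) (Fin n) ℝ) (hY : Y.IsSymm) :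
    (mexp ((2:ℝ)⁻¹ • Y))ᵀ = mexp ((2:ℝ)⁻¹ • Y) := by
  rw [mexp, ← Matrix.exp_transpose, Matrix.transpose_smul, hY]

private lemma mexp_factor {n : ℕ} (Y : Matrix (Fin n) (Fin n) ℝ) :
    mexp Y = mexp ((2:ℝ)⁻¹ • Y) * mexp ((2:ℝ)⁻¹ • Y) := by
  have := Matrix.exp_add_of_commute ((2:ℝ)⁻¹ • Y) ((2:ℝ)⁻¹ • Y) (Commute.refl _)
  rw [mexp, mexp, ← this]
  congr 1
  module

private lemma mexp_inv_mul {n : ℕ} (A : Matrix (Fin n) (Fin n) ℝ) :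
    mexp (-A) * mexp A = 1 := by
  have := Matrix.exp_add_of_commute (-A) A (Commute.neg_left (Commute.refl A))
  rw [mexp, mexp, ← this]
  simp [NormedSpace.exp_zero]

private lemma Pu_eq {n : ℕ} (u : Fin n → ℝ) (Y : Matrix (Fin n) (Fin n) ℝ) (hY : Y.IsSymm) :
    Pu u Y = ((mexp ((2:ℝ)⁻¹ • Y) *ᵥ u) ⬝ᵥ (mexp ((2:ℝ)⁻¹ • Y) *ᵥ u))⁻¹ •
      Matrix.vecMulVec (mexp ((2:ℝ)⁻¹ • Y) *ᵥ u) (mexp ((2:ℝ)⁻¹ • Y) *ᵥ u) := by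
  set E := mexp ((2:ℝ)⁻¹ • Y) with hEdef
  have hE : Eᵀ = E := mexp_transpose Y hY
  have hsym : ∀ a b, E a b = E b a := by
    intro a b
    conv_lhs => rw [← hE]
    rfl
  have h1 : u ⬝ᵥ (mexp Y *ᵥ u) = (E *ᵥ u) ⬝ᵥ (E *ᵥ u) := by
    rw [mexp_factor, ← hEdef, ← Matrix.mulVec_mulVec, Matrix.dotProduct_mulVec]
    nth_rewrite 1 [← hE]
    rw [Matrix.vecMul_transpose]
  have h2 : E * Matrix.vecMulVec u u * E = Matrix.vecMulVec (E *ᵥ u) (E *ᵥ u) := by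
    ext i j
    simp only [Matrix.mul_apply, Matrix.vecMulVec_apply, Matrix.mulVec, dotProduct]
    rw [Finset.sum_mul_sum]
    rw [Finset.sum_comm]
    apply Finset.sum_congr rfl
    intro l _
    rw [Finset.sum_mul]
    apply Finset.sum_congr rfl
    intro k _
    rw [hsym j l]
    ring
  rw [Pu, h1, h2]

end AuxStmt18

/-- A multiplicative approximation of `e^{Y/2} u` gives a rank-1
matrix close to `P_u(Y)` in trace norm. -/
theorem stmt18 (n : ℕ) (Y : Matrix (Fin n) (Fin n) ℝ) (hY : Y.IsSymm)
    (u : Fin n → ℝ) (hu : u ≠ 0) (ε : ℝ) (hε0 : 0 ≤ ε) (hε1 : ε < 1)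
    (y : Fin n → ℝ)
    (h : enorm2 (mexp ((2 : ℝ)⁻¹ • Y) *ᵥ u - y) ≤
      ε / Real.sqrt 8 * enorm2 (mexp ((2 : ℝ)⁻¹ • Y) *ᵥ u)) :
    y ≠ 0 ∧ traceNorm (Pu u Y - (enorm2 y ^ 2)⁻¹ • Matrix.vecMulVec y y) ≤ ε := by
  classical
  set z : Fin n → ℝ := mexp ((2:ℝ)⁻¹ • Y) *ᵥ u with hzdef
  have hzne : z ≠ 0 := by
    intro h0
    apply hu
    have h1 : mexp (-((2:ℝ)⁻¹ • Y)) *ᵥ z = u := by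
      rw [hzdef, Matrix.mulVec_mulVec, mexp_inv_mul, Matrix.one_mulVec]
    rw [← h1, h0, Matrix.mulVec_zero]
  set S := z ⬝ᵥ z with hSdef
  set T := y ⬝ᵥ y with hTdef
  set t := z ⬝ᵥ y with htdef
  have hsq : ∀ v : Fin n → ℝ, enorm2 v ^ 2 = v ⬝ᵥ v := by
    intro v
    rw [enorm2, Real.sq_sqrt (Finset.sum_nonneg fun i _ => sq_nonneg _)]
    simp [dotProduct, pow_two]
  have hen_nonneg : ∀ v : Fin n → ℝ, 0 ≤ enorm2 v := fun v => Real.sqrt_nonneg _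
  have hSpos : 0 < S := by
    have hnn : 0 ≤ S := by
      rw [hSdef, dotProduct]
      exact Finset.sum_nonneg fun i _ => mul_self_nonneg _
    have hne : S ≠ 0 := fun hc => hzne (dotProduct_self_eq_zero.mp hc)
    exact lt_of_le_of_ne hnn (Ne.symm hne)
  have hDS : (z - y) ⬝ᵥ (z - y) ≤ ε ^ 2 / 8 * S := by
    have h2 : enorm2 (z - y) ^ 2 ≤ (ε / Real.sqrt 8 * enorm2 z) ^ 2 :=
      pow_le_pow_left₀ (hen_nonneg _) h 2
    rw [hsq] at h2
    refine h2.trans (le_of_eq ?_)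
    rw [mul_pow, div_pow, Real.sq_sqrt (by norm_num : (0:ℝ) ≤ 8), hsq z]
  have hexpand : (z - y) ⬝ᵥ (z - y) = S - 2 * t + T := by
    rw [sub_dotProduct, dotProduct_sub, dotProduct_sub,
      dotProduct_comm y z]
    ring
  have hyne : y ≠ 0 := by
    intro h0
    rw [h0] at hDS
    simp only [sub_zero] at hDS
    rw [← hSdef] at hDS
    have hεsq : ε ^ 2 / 8 < 1 := by nlinarith
    have := mul_lt_mul_of_pos_right hεsq hSpos
    rw [one_mul] at this
    linarith
  have hTpos : 0 < T := by
    have hnn : 0 ≤ T := by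
      rw [hTdef, dotProduct]
      exact Finset.sum_nonneg fun i _ => mul_self_nonneg _
    have hne : T ≠ 0 := fun hc => hyne (dotProduct_self_eq_zero.mp hc)
    exact lt_of_le_of_ne hnn (Ne.symm hne)
  have hSne : S ≠ 0 := ne_of_gt hSpos
  have hTne : T ≠ 0 := ne_of_gt hTpos
  -- the matrix
  have hPu : Pu u Y = S⁻¹ • Matrix.vecMulVec z z := by
    rw [Pu_eq u Y hY]
  have hy2 : (enorm2 y ^ 2)⁻¹ = T⁻¹ := by rw [hsq y]
  set M := Pu u Y - (enorm2 y ^ 2)⁻¹ • Matrix.vecMulVec y y with hMdef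
  have hMeq : M = S⁻¹ • Matrix.vecMulVec z z - T⁻¹ • Matrix.vecMulVec y y := by
    rw [hMdef, hPu, hy2]
  have hHerm : M.IsHermitian := by
    rw [hMeq]
    show _ᴴ = _
    ext i j
    simp only [Matrix.conjTranspose_apply, Matrix.sub_apply, Matrix.smul_apply,
      Matrix.vecMulVec_apply, star_trivial, smul_eq_mul]
    ring
  have hprod : ∀ (a b : ℝ) (p q r s : Fin n → ℝ),
      ((a • Matrix.vecMulVec p q) * (b • Matrix.vecMulVec r s)).trace
        = a * b * ((q ⬝ᵥ r) * (p ⬝ᵥ s)) := by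
    intro a b p q r s
    rw [Matrix.smul_mul, Matrix.mul_smul, _root_.vecMulVec_mul_vecMulVec, Matrix.trace_smul,
      Matrix.trace_smul, Matrix.trace_smul, trace_vecMulVec']
    simp [smul_eq_mul]
    ring
  have htrace : (M * M).trace
      = S⁻¹ * S⁻¹ * (S * S) - 2 * (S⁻¹ * T⁻¹) * (t * t) + T⁻¹ * T⁻¹ * (T * T) := by
    rw [hMeq]
    simp only [sub_mul, mul_sub, Matrix.trace_sub, hprod]
    rw [dotProduct_comm y z, ← hSdef, ← hTdef, ← htdef]
    ring
  have htr : (M * M).trace ≤ ε ^ 2 / 4 := by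
    have h1 : S * T - t ^ 2 ≤ T * ((z - y) ⬝ᵥ (z - y)) := by
      rw [hexpand]
      nlinarith [sq_nonneg (t - T)]
    have h2 : T * ((z - y) ⬝ᵥ (z - y)) ≤ T * (ε ^ 2 / 8 * S) :=
      mul_le_mul_of_nonneg_left hDS (le_of_lt hTpos)
    have h3 : S * T * (1 - ε ^ 2 / 8) ≤ t ^ 2 := by nlinarith
    have hSTinv : 0 ≤ S⁻¹ * T⁻¹ :=
      mul_nonneg (inv_nonneg.mpr hSpos.le) (inv_nonneg.mpr hTpos.le)
    have h4 : (S⁻¹ * T⁻¹) * (S * T * (1 - ε ^ 2 / 8)) ≤ (S⁻¹ * T⁻¹) * t ^ 2 :=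
      mul_le_mul_of_nonneg_left h3 hSTinv
    have h5 : (S⁻¹ * T⁻¹) * (S * T * (1 - ε ^ 2 / 8)) = 1 - ε ^ 2 / 8 := by
      field_simp
    have g1 : S⁻¹ * S⁻¹ * (S * S) = 1 := by field_simp
    have g2 : T⁻¹ * T⁻¹ * (T * T) = 1 := by field_simp
    rw [htrace, g1, g2]
    nlinarith [h4, h5]
  have hrank : M.rank ≤ 2 := by
    rw [hMeq, sub_eq_add_neg, ← neg_smul, _root_.smul_vecMulVec, _root_.smul_vecMulVec]
    exact le_trans (rank_add_le' _ _)
      (add_le_add (rank_vecMulVec_le' _ _) (rank_vecMulVec_le' _ _))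
  have hcard : Fintype.card {i // hHerm.eigenvalues i ≠ 0} ≤ 2 := by
    rw [← hHerm.rank_eq_card_non_zero_eigs]
    exact hrank
  have heigs : eigs M = hHerm.eigenvalues := by
    unfold eigs
    rw [dif_pos hHerm]
  have hCS := sum_abs_sq_le hHerm.eigenvalues hcard
  have hsum2 : ∑ i, hHerm.eigenvalues i ^ 2 = (M * M).trace := sum_sq_eigs_eq M hHerm
  have habs : 0 ≤ ∑ i, |hHerm.eigenvalues i| :=
    Finset.sum_nonneg fun i _ => abs_nonneg _
  refine ⟨hyne, ?_⟩
  have hkey : (∑ i, |hHerm.eigenvalues i|) ^ 2 ≤ ε ^ 2 / 2 := by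
    rw [hsum2] at hCS
    linarith [hCS, htr]
  have hfin : (∑ i, |hHerm.eigenvalues i|) ≤ ε :=
    le_of_sq_le_half_sq habs hε0 hkey
  rw [traceNorm, heigs]
  exact hfin
end
end
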